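/- There exist an ed signature Σ, two bisimilar Σ-edts M1 and M2, and an ed sentence ρ containing the hybrid binder such that M1 ⊨ ρ but M2 ⊭ ρ. Concretely, for Σ = ({e}, {a}) and ρ = ↓x.⟨e⧸a′=a⟩x: the edts M1 with a single control state c0 and loop R_e = {(γ0, γ0)} satisfies ρ, while the bisimilar edts M2 with two control states c0, c, relation R′_e = {(γ0, γ), (γ, γ0)} where ctrl(γ0) = c0, ctrl(γ) = c and ω(γ0) = ω(γ), does not satisfy ρ. -/

import Mathlib

/-!
Framework: event/data transition systems (edts) over an ed signature Σ = (E, A)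
with a data universe `Data`, a type `SP` of state predicates and a type `TP` of
transition predicates (interpreted via `spSat`/`tpSat`).
-/

/-- Configurations: a control state paired with an `A`-data state. -/
abbrev Conf' (C A Data : Type) : Type := C × (A → Data)

/-- The raw data of a Σ-event/data transition system with control states `C`. -/
structure PreEDTS (E A Data C : Type) : Type where
  conf : Set (Conf' C A Data)
  rel : E → Set (Conf' C A Data × Conf' C A Data)
  c0 : C
  init : Set (Conf' C A Data)

/-- `M` is a genuine Σ-edts: transitions stay inside the configurations, the
initial configurations form a non-empty subset of the configurations, all with
control state `c0`, and every configuration is reachable from an initial one. -/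
def PreEDTS.IsEDTS {E A Data C : Type} (M : PreEDTS E A Data C) : Prop :=
  (∀ (e : E) p, p ∈ M.rel e → p.1 ∈ M.conf ∧ p.2 ∈ M.conf) ∧
  M.init ⊆ M.conf ∧
  (∀ γ ∈ M.init, γ.1 = M.c0) ∧
  M.init.Nonempty ∧
  (∀ γ ∈ M.conf, ∃ γ0 ∈ M.init,
    Relation.ReflTransGen (fun γ γ' => ∃ e : E, (γ, γ') ∈ M.rel e) γ0 γ)

/-- Σ-ed actions: atomic actions `e⧸ψ`, union, sequential composition, iteration. -/
inductive Act (E TP : Type) : Type where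
  | atom : E → TP → Act E TP
  | choice : Act E TP → Act E TP → Act E TP
  | seq : Act E TP → Act E TP → Act E TP
  | star : Act E TP → Act E TP

/-- Interpretation of Σ-ed actions over an edts `M`. -/
def actRel {E A Data C TP : Type} (tpSat : TP → (A → Data) → (A → Data) → Prop)
    (M : PreEDTS E A Data C) :
    Act E TP → Conf' C A Data → Conf' C A Data → Prop
  | Act.atom e ψ => fun γ γ' => (γ, γ') ∈ M.rel e ∧ tpSat ψ γ.2 γ'.2
  | Act.choice l₁ l₂ => fun γ γ' => actRel tpSat M l₁ γ γ' ∨ actRel tpSat M l₂ γ γ'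
  | Act.seq l₁ l₂ => fun γ γ' => ∃ γm, actRel tpSat M l₁ γ γm ∧ actRel tpSat M l₂ γm γ'
  | Act.star l => Relation.ReflTransGen (actRel tpSat M l)

/-- Hybrid-free Σ-ed formulae: `ρ ::= φ | ⟨λ⟩ρ | true | ¬ρ | ρ₁ ∨ ρ₂`. -/
inductive HFrm (E TP SP : Type) : Type where
  | st : SP → HFrm E TP SP
  | dia : Act E TP → HFrm E TP SP → HFrm E TP SP
  | tt : HFrm E TP SP
  | neg : HFrm E TP SP → HFrm E TP SP
  | or : HFrm E TP SP → HFrm E TP SP → HFrm E TP SP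

/-- Satisfaction of hybrid-free sentences at a configuration. -/
def hsat {E A Data C SP TP : Type} (spSat : SP → (A → Data) → Prop)
    (tpSat : TP → (A → Data) → (A → Data) → Prop)
    (M : PreEDTS E A Data C) : Conf' C A Data → HFrm E TP SP → Prop
  | γ, HFrm.st φ => spSat φ γ.2
  | γ, HFrm.dia l ρ => ∃ γ', actRel tpSat M l γ γ' ∧ hsat spSat tpSat M γ' ρ
  | _, HFrm.tt => True
  | γ, HFrm.neg ρ => ¬ hsat spSat tpSat M γ ρ
  | γ, HFrm.or ρ₁ ρ₂ => hsat spSat tpSat M γ ρ₁ ∨ hsat spSat tpSat M γ ρ₂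

/-- Bisimulation relations `B ⊆ Conf(M1) × Conf(M2)`: conditions (atom), (zig), (zag). -/
structure IsBisim {E A Data C₁ C₂ SP TP : Type}
    (spSat : SP → (A → Data) → Prop)
    (tpSat : TP → (A → Data) → (A → Data) → Prop)
    (M₁ : PreEDTS E A Data C₁) (M₂ : PreEDTS E A Data C₂)
    (B : Conf' C₁ A Data → Conf' C₂ A Data → Prop) : Prop where
  dom : ∀ γ₁ γ₂, B γ₁ γ₂ → γ₁ ∈ M₁.conf ∧ γ₂ ∈ M₂.conf
  atom : ∀ γ₁ γ₂, B γ₁ γ₂ → ∀ φ : SP, spSat φ γ₁.2 ↔ spSat φ γ₂.2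
  zig : ∀ γ₁ γ₂, B γ₁ γ₂ → ∀ (e : E) (ψ : TP) γ₁',
    (γ₁, γ₁') ∈ M₁.rel e → tpSat ψ γ₁.2 γ₁'.2 →
    ∃ γ₂', ((γ₂, γ₂') ∈ M₂.rel e ∧ tpSat ψ γ₂.2 γ₂'.2) ∧ B γ₁' γ₂'
  zag : ∀ γ₁ γ₂, B γ₁ γ₂ → ∀ (e : E) (ψ : TP) γ₂',
    (γ₂, γ₂') ∈ M₂.rel e → tpSat ψ γ₂.2 γ₂'.2 →
    ∃ γ₁', ((γ₁, γ₁') ∈ M₁.rel e ∧ tpSat ψ γ₁.2 γ₁'.2) ∧ B γ₁' γ₂'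

/-- `M₁` and `M₂` are bisimilar: there is a bisimulation relation additionally
satisfying the (init) condition. -/
def Bisimilar {E A Data C₁ C₂ SP TP : Type}
    (spSat : SP → (A → Data) → Prop)
    (tpSat : TP → (A → Data) → (A → Data) → Prop)
    (M₁ : PreEDTS E A Data C₁) (M₂ : PreEDTS E A Data C₂) : Prop :=
  ∃ B, IsBisim spSat tpSat M₁ M₂ B ∧
    (∀ γ₁ ∈ M₁.init, ∃ γ₂ ∈ M₂.init, B γ₁ γ₂) ∧
    (∀ γ₂ ∈ M₂.init, ∃ γ₁ ∈ M₁.init, B γ₁ γ₂)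

/-- `M ⊨ ρ`: the sentence `ρ` holds at all initial configurations of `M`. -/
def MsatHF {E A Data C SP TP : Type} (spSat : SP → (A → Data) → Prop)
    (tpSat : TP → (A → Data) → (A → Data) → Prop)
    (M : PreEDTS E A Data C) (ρ : HFrm E TP SP) : Prop :=
  ∀ γ0 ∈ M.init, hsat spSat tpSat M γ0 ρ

/-- Full Σ-ed formulae of EDHL with control-state variables `X`, the binder `↓x.ρ`
and the jump operator `@x.ρ`. -/
inductive EFrm (E TP SP X : Type) : Type where
  | st : SP → EFrm E TP SP X
  | var : X → EFrm E TP SP X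
  | bind : X → EFrm E TP SP X → EFrm E TP SP X
  | at_ : X → EFrm E TP SP X → EFrm E TP SP X
  | dia : Act E TP → EFrm E TP SP X → EFrm E TP SP X
  | tt : EFrm E TP SP X
  | neg : EFrm E TP SP X → EFrm E TP SP X
  | or : EFrm E TP SP X → EFrm E TP SP X → EFrm E TP SP X

/-- Satisfaction of EDHL formulae w.r.t. a valuation `v : X → C` and a configuration. -/
def esat {E A Data C SP TP X : Type} [DecidableEq X]
    (spSat : SP → (A → Data) → Prop)
    (tpSat : TP → (A → Data) → (A → Data) → Prop)
    (M : PreEDTS E A Data C) : (X → C) → Conf' C A Data → EFrm E TP SP X → Prop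
  | _, γ, EFrm.st φ => spSat φ γ.2
  | v, γ, EFrm.var x => γ.1 = v x
  | v, γ, EFrm.bind x ρ => esat spSat tpSat M (Function.update v x γ.1) γ ρ
  | v, _, EFrm.at_ x ρ => ∀ γ' ∈ M.conf, γ'.1 = v x → esat spSat tpSat M v γ' ρ
  | v, γ, EFrm.dia l ρ => ∃ γ', actRel tpSat M l γ γ' ∧ esat spSat tpSat M v γ' ρ
  | _, _, EFrm.tt => True
  | v, γ, EFrm.neg ρ => ¬ esat spSat tpSat M v γ ρ
  | v, γ, EFrm.or ρ₁ ρ₂ => esat spSat tpSat M v γ ρ₁ ∨ esat spSat tpSat M v γ ρ₂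

/-- A sentence is satisfied by `M` if it holds at all initial configurations
(under every valuation). -/
def MsatE {E A Data C SP TP X : Type} [DecidableEq X]
    (spSat : SP → (A → Data) → Prop)
    (tpSat : TP → (A → Data) → (A → Data) → Prop)
    (M : PreEDTS E A Data C) (ρ : EFrm E TP SP X) : Prop :=
  ∀ (v : X → C), ∀ γ0 ∈ M.init, esat spSat tpSat M v γ0 ρ

/-! ### The concrete counterexample
Signature Σ = ({e}, {a}) is modelled by `E := Unit`, `A := Unit`; the state
(resp. transition) predicates are all predicates on (pairs of) data states. -/

/-- All state predicates. -/
abbrev SP0 : Type := (Unit → Unit) → Prop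

/-- All transition predicates. -/
abbrev TP0 : Type := (Unit → Unit) → (Unit → Unit) → Prop

def spSat0 : SP0 → (Unit → Unit) → Prop := fun φ ω => φ ω

def tpSat0 : TP0 → (Unit → Unit) → (Unit → Unit) → Prop := fun ψ ω ω' => ψ ω ω'

/-- `M₁`: a single control state `c₀` with the loop `R_e = {(γ₀, γ₀)}`. -/
def M1ex : PreEDTS Unit Unit Unit Unit where
  conf := Set.univ
  rel := fun _ => Set.univ
  c0 := ()
  init := Set.univ

/-- `M₂`: two control states `c₀ = false` and `c = true`, with
`R'_e = {(γ₀, γ), (γ, γ₀)}` and the same data state everywhere. -/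
def M2ex : PreEDTS Unit Unit Unit Bool where
  conf := Set.univ
  rel := fun _ => {p | p.1.1 ≠ p.2.1}
  c0 := false
  init := {γ | γ.1 = false}

/-- The sentence `ρ = ↓x.⟨e⧸a′=a⟩x` (it contains the hybrid binder). -/
def ρex : EFrm Unit TP0 SP0 Unit :=
  EFrm.bind () (EFrm.dia (Act.atom () (fun ω ω' => ω' () = ω ())) (EFrm.var ()))

/-- `M1ex` and `M2ex` are bisimilar Σ-edts, and the ed sentence
`ρex = ↓x.⟨e⧸a′=a⟩x` (which contains the hybrid binder) is satisfied by `M1ex`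
but not by `M2ex`. -/
theorem hybrid_sentence_not_bisimulation_invariant :
    M1ex.IsEDTS ∧ M2ex.IsEDTS ∧
    Bisimilar spSat0 tpSat0 M1ex M2ex ∧
    MsatE spSat0 tpSat0 M1ex ρex ∧
    ¬ MsatE spSat0 tpSat0 M2ex ρex := by
  have hω : ∀ ω ω' : Unit → Unit, ω = ω' := fun ω ω' => Subsingleton.elim ω ω'
  refine ⟨⟨fun _ p _ => ⟨trivial, trivial⟩, fun _ _ => trivial, fun _ _ => rfl,
      ⟨((), fun _ => ()), trivial⟩, fun γ _ => ⟨γ, trivial, Relation.ReflTransGen.refl⟩⟩,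
    ⟨fun _ p hp => ⟨trivial, trivial⟩, fun _ _ => trivial, fun γ h => h,
      ⟨((false : Bool), fun _ => ()), rfl⟩, ?_⟩, ?_, ?_, ?_⟩
  · intro γ _
    cases hγ : γ.1
    · exact ⟨γ, hγ, Relation.ReflTransGen.refl⟩
    · refine ⟨(false, γ.2), rfl, Relation.ReflTransGen.single ⟨(), ?_⟩⟩
      simp [M2ex, hγ]
  · -- Bisimilar
    refine ⟨fun _ _ => True, ⟨fun _ _ _ => ⟨trivial, trivial⟩, ?_, ?_, ?_⟩, ?_, ?_⟩
    · intro γ₁ γ₂ _ φ; rw [hω γ₁.2 γ₂.2]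
    · intro γ₁ γ₂ _ e ψ γ₁' _ hψ
      refine ⟨(!γ₂.1, γ₂.2), ⟨?_, ?_⟩, trivial⟩
      · simp [M2ex]
      · show ψ γ₂.2 γ₂.2
        have h' : ψ γ₁.2 γ₁'.2 := hψ
        convert h' using 2
    · intro γ₁ γ₂ _ e ψ γ₂' _ hψ
      refine ⟨γ₁, ⟨trivial, ?_⟩, trivial⟩
      show ψ γ₁.2 γ₁.2
      have h' : ψ γ₂.2 γ₂'.2 := hψ
      convert h' using 2
    · intro γ₁ _; exact ⟨((false : Bool), fun _ => ()), rfl, trivial⟩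
    · intro γ₂ _; exact ⟨((), fun _ => ()), trivial, trivial⟩
  · -- M1 ⊨ ρ
    intro v γ0 _
    exact ⟨γ0, ⟨trivial, rfl⟩, by simp [esat]⟩
  · -- M2 ⊭ ρ
    intro h
    have := h (fun _ => false) ((false : Bool), fun _ => ()) rfl
    obtain ⟨γ', ⟨hrel, -⟩, hvar⟩ := this
    simp [M2ex] at hrel
    simp only [esat, Function.update_self] at hvar
    simp_all
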